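/- Let α be a real number with 0 < α < 1/2 and let (u_n)_{n ≥ 0} be a sequence with values in {0,1} ⊆ ℝ that contains no occurrence of the block 11 (i.e., for no n do u_n = u_{n+1} = 1) and whose frequency of 1's equals α, i.e., #{n < N : u_n = 1}/N → α as N → ∞ (this holds in particular for a Sturmian sequence of slope α avoiding the block 11). Then the inconstancy of the sequence exists and equals ℐ((u_n)) = 1 + 2(√2 − 1)α; in particular it lies in the open interval (1, √2). -/

import Mathlib

noncomputable section
open MeasureTheory Real Set Filter
open scoped ENNReal

/-- The point `(x, y)` of the Euclidean plane. -/
def pt (x y : ℝ) : EuclideanSpace ℝ (Fin 2) := WithLp.toLp 2 ![x, y]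

/-- The polygonal curve `Γ_N` through `(0,u₀), (1,u₁), …, (N,u_N)`: the union of the
segments joining `(i, u_i)` to `(i+1, u_{i+1})` for `i = 0, …, N−1`. -/
def polyCurve (u : ℕ → ℝ) (N : ℕ) : Set (EuclideanSpace ℝ (Fin 2)) :=
  ⋃ i ∈ Finset.range N, segment ℝ (pt i (u i)) (pt (i + 1) (u (i + 1)))

/-- The length `ℓ(Γ_N) = Σ_{i<N} √(1 + (u_{i+1} − u_i)²)` of the polygonal curve. -/
def polyLength (u : ℕ → ℝ) (N : ℕ) : ℝ :=
  ∑ i ∈ Finset.range N, Real.sqrt (1 + (u (i + 1) - u i) ^ 2)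

/-- The perimeter `δ(Γ_N)` of the convex hull of the polygonal curve: the
one-dimensional Hausdorff measure of the frontier of the convex hull. -/
def polyDelta (u : ℕ → ℝ) (N : ℕ) : ℝ :=
  (μH[1] (frontier (convexHull ℝ (polyCurve u N)))).toReal

/-- The inconstancy `ℐ(Γ_N) := 2 ℓ(Γ_N) / δ(Γ_N)` of the polygonal curve. -/
def polyIncon (u : ℕ → ℝ) (N : ℕ) : ℝ :=
  2 * polyLength u N / polyDelta u N

lemma pt_zero (x y : ℝ) : pt x y 0 = x := rfl

lemma pt_one (x y : ℝ) : pt x y 1 = y := rfl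

lemma pt_ext (p : EuclideanSpace ℝ (Fin 2)) : pt (p 0) (p 1) = p := by
  ext i; fin_cases i <;> rfl

lemma pt_combo (s t x₁ y₁ x₂ y₂ : ℝ) :
    s • pt x₁ y₁ + t • pt x₂ y₂ = pt (s*x₁ + t*x₂) (s*y₁ + t*y₂) := by
  ext i; fin_cases i <;>
    simp [pt, PiLp.add_apply, PiLp.smul_apply, smul_eq_mul]

lemma dist_pt (x₁ y₁ x₂ y₂ : ℝ) :
    dist (pt x₁ y₁) (pt x₂ y₂) = Real.sqrt ((x₁ - x₂)^2 + (y₁ - y₂)^2) := by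
  rw [EuclideanSpace.dist_eq]
  simp [Fin.sum_univ_two, pt_zero, pt_one, Real.dist_eq, sq_abs]

lemma hm_segment (p q : EuclideanSpace ℝ (Fin 2)) :
    μH[1] (segment ℝ p q) = ENNReal.ofReal (dist p q) := by
  rw [hausdorffMeasure_segment, edist_dist]

lemma mem_segment_horizontal {l r x : ℝ} (y : ℝ) (h1 : l ≤ x) (h2 : x ≤ r) :
    pt x y ∈ segment ℝ (pt l y) (pt r y) := by
  have : x ∈ Icc l r := ⟨h1, h2⟩
  rw [← segment_eq_Icc (h1.trans h2)] at this
  obtain ⟨s, t, hs, ht, hst, h⟩ := this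
  refine ⟨s, t, hs, ht, hst, ?_⟩
  rw [pt_combo]
  have hy : s * y + t * y = y := by rw [← add_mul, hst, one_mul]
  rw [smul_eq_mul, smul_eq_mul] at h
  rw [h, hy]

/-- The closed trapezoid with horizontal sides `[a,b] × {0}` and `[c,d] × {1}`. -/
def Tset (a b c d : ℝ) : Set (EuclideanSpace ℝ (Fin 2)) :=
  {p | 0 ≤ p 1 ∧ p 1 ≤ 1 ∧ a * (1 - p 1) + c * p 1 ≤ p 0 ∧ p 0 ≤ b * (1 - p 1) + d * p 1}

lemma convex_Tset (a b c d : ℝ) : Convex ℝ (Tset a b c d) := by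
  intro p hp q hq s t hs ht hst
  have ht' : t = 1 - s := by linarith
  subst ht'
  obtain ⟨hp0, hp1, hpl, hpr⟩ := hp
  obtain ⟨hq0, hq1, hql, hqr⟩ := hq
  have e1 : (s • p + (1-s) • q) 1 = s * p 1 + (1-s) * q 1 := rfl
  have e0 : (s • p + (1-s) • q) 0 = s * p 0 + (1-s) * q 0 := rfl
  refine ⟨?_, ?_, ?_, ?_⟩ <;> rw [e1] <;> try rw [e0]
  · positivity
  · nlinarith
  · nlinarith [mul_le_mul_of_nonneg_left hpl hs, mul_le_mul_of_nonneg_left hql ht]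
  · nlinarith [mul_le_mul_of_nonneg_left hpr hs, mul_le_mul_of_nonneg_left hqr ht]

lemma mem_Tset_pt {a b c d x y : ℝ} (h0 : 0 ≤ y) (h1 : y ≤ 1)
    (hl : a * (1 - y) + c * y ≤ x) (hr : x ≤ b * (1 - y) + d * y) :
    pt x y ∈ Tset a b c d := by
  refine ⟨?_, ?_, ?_, ?_⟩ <;> simp only [pt_zero, pt_one] <;> assumption

lemma hull_quad (a b c d : ℝ) (hab : a ≤ b) (hcd : c ≤ d) :
    convexHull ℝ {pt a 0, pt b 0, pt c 1, pt d 1} = Tset a b c d := by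
  apply Subset.antisymm
  · apply convexHull_min _ (convex_Tset a b c d)
    intro p hp
    simp only [Set.mem_insert_iff, Set.mem_singleton_iff] at hp
    rcases hp with h|h|h|h <;> subst h <;>
      apply mem_Tset_pt <;> nlinarith
  · intro p hp
    obtain ⟨h0, h1, hl, hr⟩ := hp
    set y := p 1 with hy
    have hL : pt (a * (1 - y) + c * y) y ∈
        convexHull ℝ ({pt a 0, pt b 0, pt c 1, pt d 1} : Set (EuclideanSpace ℝ (Fin 2))) := by
      apply segment_subset_convexHull (x := pt a 0) (y := pt c 1) (by simp) (by simp)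
      refine ⟨1 - y, y, by linarith, h0, by ring, ?_⟩
      rw [pt_combo]; congr 1 <;> ring
    have hR : pt (b * (1 - y) + d * y) y ∈
        convexHull ℝ ({pt a 0, pt b 0, pt c 1, pt d 1} : Set (EuclideanSpace ℝ (Fin 2))) := by
      apply segment_subset_convexHull (x := pt b 0) (y := pt d 1) (by simp) (by simp)
      refine ⟨1 - y, y, by linarith, h0, by ring, ?_⟩
      rw [pt_combo]; congr 1 <;> ring
    have := (convex_convexHull ℝ _).segment_subset hL hR
      (mem_segment_horizontal y hl hr)
    rwa [pt_ext p] at this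
lemma segment_horizontal_mem {l r y : ℝ} {p : EuclideanSpace ℝ (Fin 2)} (h : l ≤ r)
    (hp : p ∈ segment ℝ (pt l y) (pt r y)) : ∃ x, l ≤ x ∧ x ≤ r ∧ p = pt x y := by
  obtain ⟨s, t, hs, ht, hst, hc⟩ := hp
  rw [pt_combo] at hc
  have h1 : s * l ≤ s * r := mul_le_mul_of_nonneg_left h hs
  have h2 : t * l ≤ t * r := mul_le_mul_of_nonneg_left h ht
  have hy : s * y + t * y = y := by rw [← add_mul, hst, one_mul]
  rw [hy] at hc
  have hll : s * l + t * l = l := by rw [← add_mul, hst, one_mul]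
  have hrr : s * r + t * r = r := by rw [← add_mul, hst, one_mul]
  exact ⟨s*l + t*r, by linarith, by linarith, hc.symm⟩

lemma continuous_c1 : Continuous fun p : EuclideanSpace ℝ (Fin 2) => p 1 :=
  (EuclideanSpace.proj (1 : Fin 2)).continuous

lemma continuous_c0 : Continuous fun p : EuclideanSpace ℝ (Fin 2) => p 0 :=
  (EuclideanSpace.proj (0 : Fin 2)).continuous

lemma continuous_lline (a c : ℝ) :
    Continuous fun p : EuclideanSpace ℝ (Fin 2) => a * (1 - p 1) + c * p 1 :=
  ((continuous_const.mul (continuous_const.sub continuous_c1)).add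
    (continuous_const.mul continuous_c1))

lemma isClosed_Tset (a b c d : ℝ) : IsClosed (Tset a b c d) := by
  unfold Tset
  simp only [setOf_and]
  exact (isClosed_le continuous_const continuous_c1).inter
    ((isClosed_le continuous_c1 continuous_const).inter
    ((isClosed_le (continuous_lline a c) continuous_c0).inter
      (isClosed_le continuous_c0 (continuous_lline b d))))

lemma frontier_Tset_subset (a b c d : ℝ) :
    frontier (Tset a b c d) ⊆
      segment ℝ (pt a 0) (pt b 0) ∪ segment ℝ (pt c 1) (pt d 1) ∪
      segment ℝ (pt a 0) (pt c 1) ∪ segment ℝ (pt b 0) (pt d 1) := by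
  intro p hp
  have hpT : p ∈ Tset a b c d := (isClosed_Tset a b c d).frontier_subset hp
  have hpi : p ∉ interior (Tset a b c d) := hp.2
  obtain ⟨h0, h1, hl, hr⟩ := hpT
  by_cases e0 : p 1 = 0
  · left; left; left
    rw [← pt_ext p, e0]
    exact mem_segment_horizontal _ (by rw [e0] at hl; linarith) (by rw [e0] at hr; linarith)
  by_cases e1 : p 1 = 1
  · left; left; right
    rw [← pt_ext p, e1]
    exact mem_segment_horizontal _ (by rw [e1] at hl; linarith) (by rw [e1] at hr; linarith)
  by_cases el : a * (1 - p 1) + c * p 1 = p 0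
  · left; right
    refine ⟨1 - p 1, p 1, by linarith, h0, by ring, ?_⟩
    rw [pt_combo]
    rw [show (1 - p 1)*a + p 1 * c = p 0 by linear_combination el]
    rw [show (1 - p 1)*0 + p 1*1 = p 1 by ring]
    exact pt_ext p
  by_cases er : p 0 = b * (1 - p 1) + d * p 1
  · right
    refine ⟨1 - p 1, p 1, by linarith, h0, by ring, ?_⟩
    rw [pt_combo]
    rw [show (1 - p 1)*b + p 1 * d = p 0 by linear_combination -er]
    rw [show (1 - p 1)*0 + p 1*1 = p 1 by ring]
    exact pt_ext p
  -- otherwise p is in the open set, hence interior: contradiction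
  exfalso
  apply hpi
  have hU : IsOpen {q : EuclideanSpace ℝ (Fin 2) |
      0 < q 1 ∧ q 1 < 1 ∧ a * (1 - q 1) + c * q 1 < q 0 ∧ q 0 < b * (1 - q 1) + d * q 1} := by
    simp only [setOf_and]
    exact (isOpen_lt continuous_const continuous_c1).inter
      ((isOpen_lt continuous_c1 continuous_const).inter
      ((isOpen_lt (continuous_lline a c) continuous_c0).inter
        (isOpen_lt continuous_c0 (continuous_lline b d))))
  have hUsub : {q : EuclideanSpace ℝ (Fin 2) |
      0 < q 1 ∧ q 1 < 1 ∧ a * (1 - q 1) + c * q 1 < q 0 ∧ q 0 < b * (1 - q 1) + d * q 1}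
      ⊆ Tset a b c d := fun q hq => ⟨hq.1.le, hq.2.1.le, hq.2.2.1.le, hq.2.2.2.le⟩
  exact interior_maximal hUsub hU
    ⟨h0.lt_of_ne (Ne.symm e0), h1.lt_of_ne e1, hl.lt_of_ne el, hr.lt_of_ne er⟩

lemma not_mem_interior_of_c1 {a b c d y : ℝ} {p : EuclideanSpace ℝ (Fin 2)}
    (hy : p 1 = y) (hcase : y = 0 ∨ y = 1) : p ∉ interior (Tset a b c d) := by
  intro h
  rw [mem_interior_iff_mem_nhds, Metric.mem_nhds_iff] at h
  obtain ⟨ε, hε, hball⟩ := h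
  set v : EuclideanSpace ℝ (Fin 2) := EuclideanSpace.single (1 : Fin 2) (1:ℝ) with hv
  have hsingle : ∀ r : ℝ, dist (p + r • v) p = |r| := by
    intro r
    rw [dist_eq_norm]
    have : p + r • v - p = r • v := by abel
    rw [this, norm_smul, hv, EuclideanSpace.norm_single]
    simp
  have happ : ∀ r : ℝ, (p + r • v) 1 = p 1 + r := by
    intro r
    have : (p + r • v) 1 = p 1 + r * v 1 := rfl
    rw [this, hv]
    simp [EuclideanSpace.single_apply]
  rcases hcase with h0 | h1
  · have hq : p + (-(ε/2)) • v ∈ Tset a b c d := by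
      apply hball
      simp only [Metric.mem_ball, hsingle, abs_neg, abs_div]
      rw [abs_of_nonneg hε.le]
      norm_num [hε]
    have := hq.1
    rw [happ, hy, h0] at this
    linarith
  · have hq : p + (ε/2) • v ∈ Tset a b c d := by
      apply hball
      simp only [Metric.mem_ball, hsingle, abs_div]
      rw [abs_of_nonneg hε.le]
      norm_num [hε]
    have := hq.2.1
    rw [happ, hy, h1] at this
    linarith

lemma bottom_top_subset_frontier {a b c d : ℝ} (hab : a ≤ b) (hcd : c ≤ d) :
    segment ℝ (pt a 0) (pt b 0) ∪ segment ℝ (pt c 1) (pt d 1) ⊆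
      frontier (Tset a b c d) := by
  intro p hp
  rcases hp with hp | hp
  · obtain ⟨x, hx1, hx2, rfl⟩ := segment_horizontal_mem hab hp
    constructor
    · exact subset_closure (mem_Tset_pt le_rfl zero_le_one (by linarith) (by linarith))
    · exact not_mem_interior_of_c1 (pt_one x 0) (Or.inl rfl)
  · obtain ⟨x, hx1, hx2, rfl⟩ := segment_horizontal_mem hcd hp
    constructor
    · exact subset_closure (mem_Tset_pt zero_le_one le_rfl (by linarith) (by linarith))
    · exact not_mem_interior_of_c1 (pt_one x 1) (Or.inr rfl)
lemma measurableSet_segment (p q : EuclideanSpace ℝ (Fin 2)) :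
    MeasurableSet (segment ℝ p q) := by
  rw [← convexHull_pair]
  exact (((Set.finite_singleton q).insert p).isCompact_convexHull (𝕜 := ℝ)).isClosed.measurableSet

lemma dist_pt_horiz (x₁ x₂ y : ℝ) (h : x₁ ≤ x₂) : dist (pt x₁ y) (pt x₂ y) = x₂ - x₁ := by
  rw [dist_pt]
  rw [show (x₁ - x₂)^2 + (y - y)^2 = (x₂ - x₁)^2 by ring]
  rw [Real.sqrt_sq_eq_abs, abs_of_nonneg (by linarith)]

lemma dist_pt_slant (x₁ x₂ : ℝ) : dist (pt x₁ 0) (pt x₂ 1) = Real.sqrt (1 + (x₂ - x₁)^2) := by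
  rw [dist_pt]
  congr 1
  ring

lemma tset_measure_bounds {a b c d : ℝ} (hab : a ≤ b) (hcd : c ≤ d) :
    ENNReal.ofReal ((b - a) + (d - c)) ≤ μH[1] (frontier (Tset a b c d)) ∧
    μH[1] (frontier (Tset a b c d)) ≤
      ENNReal.ofReal ((b - a) + (d - c) + Real.sqrt (1 + (c - a)^2) + Real.sqrt (1 + (d - b)^2)) := by
  constructor
  · have hdisj : Disjoint (segment ℝ (pt a 0) (pt b 0)) (segment ℝ (pt c 1) (pt d 1)) := by
      rw [Set.disjoint_left]
      rintro p hp1 hp2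
      obtain ⟨x, _, _, rfl⟩ := segment_horizontal_mem hab hp1
      obtain ⟨x', _, _, he⟩ := segment_horizontal_mem hcd hp2
      have h0 : pt x (0:ℝ) 1 = 0 := pt_one x 0
      rw [he] at h0
      rw [pt_one] at h0
      norm_num at h0
    calc ENNReal.ofReal ((b - a) + (d - c))
        = μH[1] (segment ℝ (pt a 0) (pt b 0)) + μH[1] (segment ℝ (pt c 1) (pt d 1)) := by
          rw [hm_segment, hm_segment, dist_pt_horiz _ _ _ hab, dist_pt_horiz _ _ _ hcd,
            ← ENNReal.ofReal_add (by linarith) (by linarith)]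
      _ = μH[1] (segment ℝ (pt a 0) (pt b 0) ∪ segment ℝ (pt c 1) (pt d 1)) := by
          rw [measure_union hdisj (measurableSet_segment _ _)]
      _ ≤ μH[1] (frontier (Tset a b c d)) :=
          measure_mono (bottom_top_subset_frontier hab hcd)
  · have h1 : (0:ℝ) ≤ b - a := by linarith
    have h2 : (0:ℝ) ≤ d - c := by linarith
    have h3 : (0:ℝ) ≤ Real.sqrt (1 + (c - a)^2) := Real.sqrt_nonneg _
    have h4 : (0:ℝ) ≤ Real.sqrt (1 + (d - b)^2) := Real.sqrt_nonneg _
    calc μH[1] (frontier (Tset a b c d))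
        ≤ μH[1] (segment ℝ (pt a 0) (pt b 0) ∪ segment ℝ (pt c 1) (pt d 1) ∪
            segment ℝ (pt a 0) (pt c 1) ∪ segment ℝ (pt b 0) (pt d 1)) :=
          measure_mono (frontier_Tset_subset a b c d)
      _ ≤ μH[1] (segment ℝ (pt a 0) (pt b 0)) + μH[1] (segment ℝ (pt c 1) (pt d 1)) +
            μH[1] (segment ℝ (pt a 0) (pt c 1)) + μH[1] (segment ℝ (pt b 0) (pt d 1)) := by
          refine le_trans (measure_union_le _ _) ?_
          refine add_le_add (le_trans (measure_union_le _ _) ?_) le_rfl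
          exact add_le_add (measure_union_le _ _) le_rfl
      _ = ENNReal.ofReal ((b - a) + (d - c) + Real.sqrt (1 + (c - a)^2) +
            Real.sqrt (1 + (d - b)^2)) := by
          rw [hm_segment, hm_segment, hm_segment, hm_segment,
            dist_pt_horiz _ _ _ hab, dist_pt_horiz _ _ _ hcd,
            dist_pt_slant, dist_pt_slant,
            ← ENNReal.ofReal_add h1 h2, ← ENNReal.ofReal_add (by linarith) h3,
            ← ENNReal.ofReal_add (by linarith) h4]
lemma vertex_mem_polyCurve (u : ℕ → ℝ) (N i : ℕ) (hN : 1 ≤ N) (hi : i ≤ N) :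
    pt i (u i) ∈ polyCurve u N := by
  rcases lt_or_eq_of_le hi with h | h
  · exact Set.mem_biUnion (Finset.mem_range.2 h) (left_mem_segment ℝ _ _)
  · subst h
    have hj : i - 1 < i := by omega
    have hj1 : i - 1 + 1 = i := by omega
    refine Set.mem_biUnion (Finset.mem_range.2 hj) ?_
    rw [hj1]
    have : ((i - 1 : ℕ) : ℝ) + 1 = (i : ℝ) := by
      rw [← Nat.cast_add_one, hj1]
    rw [this]
    exact right_mem_segment ℝ _ _

lemma hull_curve_eq (u : ℕ → ℝ) (N a b c d : ℕ) (hN : 1 ≤ N)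
    (hvals : ∀ n, u n = 0 ∨ u n = 1)
    (ha : u a = 0) (hb : u b = 0) (hc : u c = 1) (hd : u d = 1)
    (haN : a ≤ N) (hbN : b ≤ N) (hcN : c ≤ N) (hdN : d ≤ N)
    (hamin : ∀ i, u i = 0 → a ≤ i) (hbmax : ∀ i, i ≤ N → u i = 0 → i ≤ b)
    (hcmin : ∀ i, u i = 1 → c ≤ i) (hdmax : ∀ i, i ≤ N → u i = 1 → i ≤ d) :
    convexHull ℝ (polyCurve u N) = Tset (a : ℝ) b c d := by
  have habn : a ≤ b := hamin b hb
  have hcdn : c ≤ d := hcmin d hd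
  have hab : (a : ℝ) ≤ b := by exact_mod_cast habn
  have hcd : (c : ℝ) ≤ d := by exact_mod_cast hcdn
  have key : ∀ j, j ≤ N → pt j (u j) ∈ Tset (a:ℝ) b c d := by
    intro j hj
    rcases hvals j with h | h <;> rw [h]
    · refine mem_Tset_pt le_rfl zero_le_one ?_ ?_
      · rw [show (a:ℝ) * (1 - 0) + (c:ℝ) * 0 = a by ring]
        exact_mod_cast hamin j h
      · rw [show (b:ℝ) * (1 - 0) + (d:ℝ) * 0 = b by ring]
        exact_mod_cast hbmax j hj h
    · refine mem_Tset_pt zero_le_one le_rfl ?_ ?_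
      · rw [show (a:ℝ) * (1 - 1) + (c:ℝ) * 1 = c by ring]
        exact_mod_cast hcmin j h
      · rw [show (b:ℝ) * (1 - 1) + (d:ℝ) * 1 = d by ring]
        exact_mod_cast hdmax j hj h
  apply Subset.antisymm
  · apply convexHull_min _ (convex_Tset (a:ℝ) b c d)
    intro p hp
    rw [polyCurve, Set.mem_iUnion₂] at hp
    obtain ⟨i, hi, hseg⟩ := hp
    have hiN : i < N := Finset.mem_range.1 hi
    have h1 : pt i (u i) ∈ Tset (a:ℝ) b c d := key i hiN.le
    have h2 : pt ((i:ℝ) + 1) (u (i+1)) ∈ Tset (a:ℝ) b c d := by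
      have := key (i+1) (by omega)
      rwa [Nat.cast_add_one] at this
    exact (convex_Tset (a:ℝ) b c d).segment_subset h1 h2 hseg
  · rw [← hull_quad _ _ _ _ hab hcd]
    apply convexHull_mono
    intro p hp
    simp only [Set.mem_insert_iff, Set.mem_singleton_iff] at hp
    rcases hp with rfl | rfl | rfl | rfl
    · rw [show (0:ℝ) = u a from ha.symm]; exact vertex_mem_polyCurve u N a hN haN
    · rw [show (0:ℝ) = u b from hb.symm]; exact vertex_mem_polyCurve u N b hN hbN
    · rw [show (1:ℝ) = u c from hc.symm]; exact vertex_mem_polyCurve u N c hN hcN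
    · rw [show (1:ℝ) = u d from hd.symm]; exact vertex_mem_polyCurve u N d hN hdN

lemma polyDelta_bounds {a b c d : ℝ} (hab : a ≤ b) (hcd : c ≤ d) (u : ℕ → ℝ) (N : ℕ)
    (hhull : convexHull ℝ (polyCurve u N) = Tset a b c d) :
    (b - a) + (d - c) ≤ polyDelta u N ∧
    polyDelta u N ≤ (b - a) + (d - c) + Real.sqrt (1 + (c - a)^2) + Real.sqrt (1 + (d - b)^2) := by
  obtain ⟨hlo, hhi⟩ := tset_measure_bounds hab hcd
  have hfin : μH[1] (frontier (Tset a b c d)) ≠ ⊤ :=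
    (hhi.trans_lt ENNReal.ofReal_lt_top).ne
  unfold polyDelta
  rw [hhull]
  constructor
  · have := ENNReal.toReal_mono hfin hlo
    rwa [ENNReal.toReal_ofReal (by linarith)] at this
  · exact ENNReal.toReal_le_of_le_ofReal
      (by linarith [Real.sqrt_nonneg (1+(c-a)^2), Real.sqrt_nonneg (1+(d-b)^2)]) hhi
lemma polyLength_eq (u : ℕ → ℝ) (hvals : ∀ n, u n = 0 ∨ u n = 1)
    (h11 : ∀ n, ¬ (u n = 1 ∧ u (n + 1) = 1)) (N : ℕ) :
    polyLength u N = N + (Real.sqrt 2 - 1) *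
      ((((Finset.range N).filter fun n => u n = 1).card : ℝ) +
       (((Finset.range (N+1)).filter fun n => u n = 1).card : ℝ) -
       (if u 0 = 1 then (1:ℝ) else 0)) := by
  classical
  have hterm : ∀ i, Real.sqrt (1 + (u (i + 1) - u i) ^ 2) =
      1 + (Real.sqrt 2 - 1) *
        ((if u i = 1 then (1:ℝ) else 0) + (if u (i+1) = 1 then (1:ℝ) else 0)) := by
    intro i
    rcases hvals i with h | h <;> rcases hvals (i+1) with h' | h'
    · rw [h, h']
      norm_num
    · rw [h, h']; norm_num
    · rw [h, h']; norm_num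
    · exact absurd ⟨h, h'⟩ (h11 i)
  unfold polyLength
  rw [Finset.sum_congr rfl (fun i _ => hterm i)]
  rw [Finset.sum_add_distrib, Finset.sum_const, Finset.card_range, ← Finset.mul_sum,
    Finset.sum_add_distrib]
  have e1 : (∑ i ∈ Finset.range N, if u i = 1 then (1:ℝ) else 0) =
      (((Finset.range N).filter fun n => u n = 1).card : ℝ) := by
    rw [Finset.sum_boole]
  have e2 : (∑ i ∈ Finset.range N, if u (i+1) = 1 then (1:ℝ) else 0) =
      (((Finset.range (N+1)).filter fun n => u n = 1).card : ℝ) -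
        (if u 0 = 1 then (1:ℝ) else 0) := by
    have := Finset.sum_range_succ' (fun i => if u i = 1 then (1:ℝ) else 0) N
    rw [Finset.sum_boole] at this
    linarith [this]
  rw [e1, e2]
  push_cast
  ring
lemma sqrt_one_add_sq_le (x : ℝ) : Real.sqrt (1 + x^2) ≤ 1 + |x| := by
  have h : (1:ℝ) + x^2 ≤ (1 + |x|)^2 := by nlinarith [abs_nonneg x, sq_abs x]
  have := Real.sqrt_le_sqrt h
  rwa [Real.sqrt_sq (by positivity)] at this

set_option maxHeartbeats 1600000 in

set_option maxHeartbeats 1600000 in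
/-- Inconstancy of a binary sequence avoiding the block `11` whose frequency of `1`'s is
`α ∈ (0, 1/2)` (in particular of a Sturmian sequence of slope `α` avoiding `11`): the
inconstancy exists, equals `1 + 2(√2 − 1)α`, and lies in the open interval `(1, √2)`. -/
theorem polyIncon_sturmian (α : ℝ) (hα0 : 0 < α) (hα2 : α < 1 / 2) (u : ℕ → ℝ)
    (hvals : ∀ n, u n = 0 ∨ u n = 1)
    (h11 : ∀ n, ¬ (u n = 1 ∧ u (n + 1) = 1))
    (hfreq : Tendsto
      (fun N : ℕ => (((Finset.range N).filter fun n => u n = 1).card : ℝ) / N)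
      atTop (nhds α)) :
    Tendsto (fun N : ℕ => polyIncon u N) atTop
      (nhds (1 + 2 * (Real.sqrt 2 - 1) * α)) ∧
    1 < 1 + 2 * (Real.sqrt 2 - 1) * α ∧
    1 + 2 * (Real.sqrt 2 - 1) * α < Real.sqrt 2 := by
  classical
  have hs2 : (1:ℝ) < Real.sqrt 2 := by
    rw [show (1:ℝ) = Real.sqrt 1 by simp]
    exact Real.sqrt_lt_sqrt (by norm_num) (by norm_num)
  refine ⟨?_, by nlinarith, by nlinarith⟩
  -- notation
  set cnt : ℕ → ℕ := fun N => ((Finset.range N).filter fun n => u n = 1).card with hcnt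
  -- existence of a one
  have hone : ∃ i, u i = 1 := by
    by_contra h
    push_neg at h
    have hz : ∀ N, cnt N = 0 := by
      intro N
      simp only [hcnt, Finset.card_eq_zero, Finset.filter_eq_empty_iff]
      exact fun i _ => h i
    have : Tendsto (fun N : ℕ => ((cnt N : ℝ)) / N) atTop (nhds 0) := by
      have : (fun N : ℕ => ((cnt N : ℝ)) / N) = fun _ => (0:ℝ) := by
        funext N; rw [hz N]; simp
      rw [this]; exact tendsto_const_nhds
    have := tendsto_nhds_unique hfreq this
    linarith
  -- c : first one
  set c : ℕ := Nat.find hone with hcdef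
  have hc : u c = 1 := Nat.find_spec hone
  have hcmin : ∀ i, u i = 1 → c ≤ i := fun i hi => Nat.find_min' hone hi
  -- a : first zero
  obtain ⟨a, ha0, hamin, ha1⟩ : ∃ a : ℕ, u a = 0 ∧ (∀ i, u i = 0 → a ≤ i) ∧ a ≤ 1 := by
    rcases hvals 0 with h0 | h0
    · exact ⟨0, h0, fun i _ => Nat.zero_le i, Nat.zero_le 1⟩
    · rcases hvals 1 with h1 | h1
      · refine ⟨1, h1, fun i hi => ?_, le_rfl⟩
        rcases Nat.eq_zero_or_pos i with rfl | hp
        · rw [h0] at hi; norm_num at hi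
        · exact hp
      · exact absurd ⟨h0, h1⟩ (h11 0)
  -- b : last zero ≤ N
  set b : ℕ → ℕ := fun N => if u N = 0 then N else N - 1 with hbdef
  have hbval : ∀ N, 1 ≤ N → u (b N) = 0 := by
    intro N hN
    simp only [hbdef]
    split_ifs with h
    · exact h
    · rcases hvals (N-1) with h' | h'
      · exact h'
      · rcases hvals N with h'' | h''
        · exact absurd h'' h
        · exfalso
          apply h11 (N-1)
          rw [Nat.sub_add_cancel hN]
          exact ⟨h', h''⟩
  have hbmax : ∀ N, ∀ i, i ≤ N → u i = 0 → i ≤ b N := by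
    intro N i hiN hi
    simp only [hbdef]
    split_ifs with h
    · exact hiN
    · have : i ≠ N := fun he => h (he ▸ hi)
      omega
  have hble : ∀ N, b N ≤ N := by intro N; simp only [hbdef]; split_ifs <;> omega
  have hbge : ∀ N, N ≤ b N + 1 := by intro N; simp only [hbdef]; split_ifs <;> omega
  -- d : last one ≤ N
  set d : ℕ → ℕ := fun N =>
    if h : (((Finset.range (N+1)).filter fun n => u n = 1)).Nonempty
    then (((Finset.range (N+1)).filter fun n => u n = 1)).max' h else 0 with hddef
  have hdne : ∀ N, c ≤ N → (((Finset.range (N+1)).filter fun n => u n = 1)).Nonempty := by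
    intro N hcN
    exact ⟨c, Finset.mem_filter.2 ⟨Finset.mem_range.2 (by omega), hc⟩⟩
  have hdval : ∀ N, c ≤ N → u (d N) = 1 := by
    intro N hcN
    simp only [hddef]
    rw [dif_pos (hdne N hcN)]
    have := Finset.max'_mem _ (hdne N hcN)
    exact (Finset.mem_filter.1 this).2
  have hdle : ∀ N, c ≤ N → d N ≤ N := by
    intro N hcN
    simp only [hddef]
    rw [dif_pos (hdne N hcN)]
    have := Finset.max'_mem _ (hdne N hcN)
    have := Finset.mem_range.1 (Finset.mem_filter.1 this).1
    omega
  have hdmax : ∀ N, c ≤ N → ∀ i, i ≤ N → u i = 1 → i ≤ d N := by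
    intro N hcN i hiN hi
    simp only [hddef]
    rw [dif_pos (hdne N hcN)]
    exact Finset.le_max' _ i (Finset.mem_filter.2 ⟨Finset.mem_range.2 (by omega), hi⟩)
  have hdc : ∀ N, c ≤ N → c ≤ d N := fun N hcN => hdmax N hcN c hcN hc
  -- counting stable beyond d N
  have hcnteq : ∀ N, c ≤ N → cnt (N+1) = cnt (d N + 1) := by
    intro N hcN
    simp only [hcnt]
    congr 1
    apply Finset.ext
    intro i
    simp only [Finset.mem_filter, Finset.mem_range]
    constructor
    · rintro ⟨hi, hui⟩
      exact ⟨by have := hdmax N hcN i (by omega) hui; omega, hui⟩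
    · rintro ⟨hi, hui⟩
      have := hdle N hcN
      exact ⟨by omega, hui⟩

  -- frequency along N+1
  have hfreq1 : Tendsto (fun N : ℕ => (cnt (N+1) : ℝ)/((N+1 : ℕ):ℝ)) atTop (nhds α) :=
    hfreq.comp (tendsto_add_atTop_nat 1)
  -- cnt (N+1) → ∞
  have hn1_top : Tendsto (fun N : ℕ => ((N+1:ℕ):ℝ)) atTop atTop :=
    tendsto_natCast_atTop_atTop.comp (tendsto_add_atTop_nat 1)
  have hcnt_top : Tendsto (fun N : ℕ => (cnt (N+1) : ℝ)) atTop atTop := by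
    have h2 : ∀ᶠ N : ℕ in atTop, α/2 < (cnt (N+1):ℝ)/((N+1:ℕ):ℝ) :=
      hfreq1.eventually (eventually_gt_nhds (by linarith))
    have h1 : ∀ᶠ N : ℕ in atTop, (α/2) * ((N+1:ℕ):ℝ) ≤ (cnt (N+1):ℝ) := by
      filter_upwards [h2] with N hN
      have hpos : (0:ℝ) < ((N+1:ℕ):ℝ) := by positivity
      have := (lt_div_iff₀ hpos).1 hN
      linarith
    exact tendsto_atTop_mono' atTop h1 (hn1_top.const_mul_atTop (by linarith))
  have hd_top : Tendsto d atTop atTop := by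
    rw [tendsto_atTop]
    intro K
    have h1 : ∀ᶠ N : ℕ in atTop, (K:ℝ) + 1 ≤ (cnt (N+1):ℝ) :=
      hcnt_top.eventually (eventually_ge_atTop ((K:ℝ)+1))
    filter_upwards [h1, eventually_ge_atTop c] with N h1 h2
    have hsub : ((Finset.range (N+1)).filter fun n => u n = 1) ⊆ Finset.range (d N + 1) := by
      intro i hi
      rw [Finset.mem_filter, Finset.mem_range] at hi
      rw [Finset.mem_range]
      have := hdmax N h2 i (by omega) hi.2
      omega
    have hcard : cnt (N+1) ≤ d N + 1 := by
      have := Finset.card_le_card hsub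
      rwa [Finset.card_range] at this
    have hr : (K:ℝ) + 1 ≤ (d N:ℝ) + 1 := le_trans h1 (by exact_mod_cast hcard)
    exact_mod_cast (by linarith : (K:ℝ) ≤ (d N:ℝ))
  have hd1_top : Tendsto (fun N => d N + 1) atTop atTop :=
    (tendsto_add_atTop_nat 1).comp hd_top
  have hcnt_d : Tendsto (fun N : ℕ => (cnt (d N + 1):ℝ)/((d N + 1:ℕ):ℝ)) atTop (nhds α) :=
    hfreq.comp hd1_top
  have hratio : Tendsto (fun N : ℕ => ((d N + 1:ℕ):ℝ)/((N+1:ℕ):ℝ)) atTop (nhds 1) := by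
    have hq := hfreq1.div hcnt_d (ne_of_gt hα0)
    rw [div_self hα0.ne'] at hq
    apply hq.congr'
    filter_upwards [eventually_ge_atTop c] with N hcN
    have he := hcnteq N hcN
    have hcpos : (0:ℝ) < (cnt (d N + 1):ℝ) := by
      have hmem : c ∈ (Finset.range (d N + 1)).filter fun n => u n = 1 :=
        Finset.mem_filter.2 ⟨Finset.mem_range.2 (by have := hdc N hcN; omega), hc⟩
      have : 0 < cnt (d N + 1) := Finset.card_pos.2 ⟨c, hmem⟩
      exact_mod_cast this
    have hpos1 : (0:ℝ) < ((N+1:ℕ):ℝ) := by positivity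
    have hpos2 : (0:ℝ) < ((d N+1:ℕ):ℝ) := by positivity
    simp only [Pi.div_apply]
    rw [he]
    field_simp
  have hd_ratio : Tendsto (fun N : ℕ => (d N : ℝ)/(N:ℝ)) atTop (nhds 1) := by
    have hNr : Tendsto (fun N : ℕ => ((N+1:ℕ):ℝ)/(N:ℝ)) atTop (nhds 1) := by
      have h0 : Tendsto (fun N : ℕ => 1 + 1/(N:ℝ)) atTop (nhds 1) := by
        have hlim := (tendsto_const_nhds (x := (1:ℝ)) (f := atTop)).add
          tendsto_one_div_atTop_nhds_zero_nat
        simpa using hlim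
      apply h0.congr'
      filter_upwards [eventually_ge_atTop 1] with N hN
      have : (0:ℝ) < (N:ℝ) := by exact_mod_cast hN
      push_cast
      field_simp
    have hmain := (hratio.mul hNr).sub tendsto_one_div_atTop_nhds_zero_nat
    rw [show (1:ℝ) * 1 - 0 = 1 by ring] at hmain
    apply hmain.congr'
    filter_upwards [eventually_ge_atTop 1] with N hN
    have hNpos : (0:ℝ) < (N:ℝ) := by exact_mod_cast hN
    push_cast
    field_simp
    ring
  -- (N+1)/N → 1
  have hNr : Tendsto (fun N : ℕ => ((N+1:ℕ):ℝ)/(N:ℝ)) atTop (nhds 1) := by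
    have h0 : Tendsto (fun N : ℕ => 1 + 1/(N:ℝ)) atTop (nhds 1) := by
      have hlim := (tendsto_const_nhds (x := (1:ℝ)) (f := atTop)).add
        tendsto_one_div_atTop_nhds_zero_nat
      simpa using hlim
    apply h0.congr'
    filter_upwards [eventually_ge_atTop 1] with N hN
    have : (0:ℝ) < (N:ℝ) := by exact_mod_cast hN
    push_cast
    field_simp
  -- length limit
  have hlen : Tendsto (fun N : ℕ => polyLength u N / N) atTop
      (nhds (1 + 2 * (Real.sqrt 2 - 1) * α)) := by
    set g0 : ℝ := if u 0 = 1 then (1:ℝ) else 0 with hg0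
    have hX : Tendsto (fun N : ℕ => (cnt N : ℝ)/N +
        ((cnt (N+1):ℝ)/((N+1:ℕ):ℝ)) * (((N+1:ℕ):ℝ)/(N:ℝ)) - g0 * (1/(N:ℝ)))
        atTop (nhds (α + α * 1 - g0 * 0)) :=
      (hfreq.add (hfreq1.mul hNr)).sub (tendsto_one_div_atTop_nhds_zero_nat.const_mul g0)
    have hlim := (tendsto_const_nhds (x := (1:ℝ)) (f := atTop)).add
      (hX.const_mul (Real.sqrt 2 - 1))
    rw [show (1:ℝ) + (Real.sqrt 2 - 1) * (α + α * 1 - g0 * 0) = 1 + 2 * (Real.sqrt 2 - 1) * α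
      by ring] at hlim
    apply hlim.congr'
    filter_upwards [eventually_ge_atTop 1] with N hN
    have hNpos : (0:ℝ) < (N:ℝ) := by exact_mod_cast hN
    rw [polyLength_eq u hvals h11 N]
    simp only [hcnt, ← hg0]
    push_cast
    field_simp
  have hbnd : ∀ᶠ N : ℕ in atTop,
      ((N:ℝ) - 2 + ((d N:ℝ) - (c:ℝ))) ≤ polyDelta u N ∧ polyDelta u N ≤ 2*(N:ℝ) + 4 := by
    filter_upwards [eventually_ge_atTop (max c 2)] with N hN
    have hcN : c ≤ N := le_trans (le_max_left _ _) hN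
    have hN2 : 2 ≤ N := le_trans (le_max_right _ _) hN
    have hN1 : 1 ≤ N := by omega
    have hhull := hull_curve_eq u N a (b N) c (d N) hN1 hvals ha0 (hbval N hN1) hc (hdval N hcN)
      (by omega : a ≤ N) (hble N) hcN (hdle N hcN) hamin (hbmax N) hcmin (hdmax N hcN)
    have hab : (a:ℝ) ≤ (b N:ℝ) := by exact_mod_cast hamin (b N) (hbval N hN1)
    have hcd : (c:ℝ) ≤ (d N:ℝ) := by exact_mod_cast hdc N hcN
    obtain ⟨hlo, hhi⟩ := polyDelta_bounds hab hcd u N hhull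
    have h1 : (N:ℝ) ≤ (b N:ℝ) + 1 := by exact_mod_cast hbge N
    have h2 : (a:ℝ) ≤ 1 := by exact_mod_cast ha1
    have h2' : (0:ℝ) ≤ (a:ℝ) := Nat.cast_nonneg a
    have h3 : (b N:ℝ) ≤ (N:ℝ) := by exact_mod_cast hble N
    have h4 : (d N:ℝ) ≤ (N:ℝ) := by exact_mod_cast hdle N hcN
    have h5 : (0:ℝ) ≤ (c:ℝ) := Nat.cast_nonneg c
    constructor
    · linarith
    · have hs1 : Real.sqrt (1 + ((c:ℝ) - a)^2) ≤ 1 + ((c:ℝ) + 1) := by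
        refine le_trans (sqrt_one_add_sq_le _) ?_
        have : |(c:ℝ) - a| ≤ (c:ℝ) + 1 := abs_le.2 ⟨by linarith, by linarith⟩
        linarith
      have hs2' : Real.sqrt (1 + ((d N:ℝ) - b N)^2) ≤ 1 + ((N:ℝ) - d N + 1) := by
        refine le_trans (sqrt_one_add_sq_le _) ?_
        have : |(d N:ℝ) - b N| ≤ (N:ℝ) - d N + 1 := abs_le.2 ⟨by linarith, by linarith⟩
        linarith
      linarith
  have hdelta : Tendsto (fun N : ℕ => polyDelta u N / (2*(N:ℝ))) atTop (nhds 1) := by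
    have hLB : Tendsto (fun N : ℕ => ((N:ℝ) - 2 + ((d N:ℝ) - (c:ℝ)))/(2*(N:ℝ)))
        atTop (nhds 1) := by
      have hX : Tendsto (fun N : ℕ => 1 - ((2:ℝ) + c) * (1/(N:ℝ)) + (d N:ℝ)/(N:ℝ))
          atTop (nhds (1 - ((2:ℝ)+c) * 0 + 1)) :=
        ((tendsto_const_nhds (x := (1:ℝ)) (f := atTop)).sub
          (tendsto_one_div_atTop_nhds_zero_nat.const_mul _)).add hd_ratio
      rw [show (1:ℝ) - ((2:ℝ)+c) * 0 + 1 = 2 by ring] at hX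
      have hX2 := hX.div_const 2
      rw [show (2:ℝ)/2 = 1 by norm_num] at hX2
      apply hX2.congr'
      filter_upwards [eventually_ge_atTop 1] with N hN
      have hNpos : (0:ℝ) < (N:ℝ) := by exact_mod_cast hN
      field_simp
      ring
    have hUB : Tendsto (fun N : ℕ => (2*(N:ℝ) + 4)/(2*(N:ℝ))) atTop (nhds 1) := by
      have hX : Tendsto (fun N : ℕ => 1 + (2:ℝ) * (1/(N:ℝ))) atTop (nhds (1 + 2*0)) :=
        (tendsto_const_nhds (x := (1:ℝ)) (f := atTop)).add
          (tendsto_one_div_atTop_nhds_zero_nat.const_mul 2)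
      rw [show (1:ℝ) + 2*0 = 1 by ring] at hX
      apply hX.congr'
      filter_upwards [eventually_ge_atTop 1] with N hN
      have hNpos : (0:ℝ) < (N:ℝ) := by exact_mod_cast hN
      field_simp
      ring
    refine tendsto_of_tendsto_of_tendsto_of_le_of_le' hLB hUB ?_ ?_
    · filter_upwards [hbnd, eventually_ge_atTop 1] with N h hN
      have hNpos : (0:ℝ) < (N:ℝ) := by exact_mod_cast hN
      have h2N : (0:ℝ) < 2*(N:ℝ) := by linarith
      exact div_le_div_of_nonneg_right h.1 h2N.le
    · filter_upwards [hbnd, eventually_ge_atTop 1] with N h hN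
      have hNpos : (0:ℝ) < (N:ℝ) := by exact_mod_cast hN
      have h2N : (0:ℝ) < 2*(N:ℝ) := by linarith
      exact div_le_div_of_nonneg_right h.2 h2N.le
  -- positivity of delta
  have hdpos : ∀ᶠ N : ℕ in atTop, 0 < polyDelta u N := by
    filter_upwards [hbnd, eventually_ge_atTop (c + 3)] with N h hN
    have h1 : (c:ℝ) + 3 ≤ (N:ℝ) := by exact_mod_cast hN
    have h2 : (c:ℝ) ≤ (d N:ℝ) := by
      have : c ≤ d N := hdc N (by omega)
      exact_mod_cast this
    linarith [h.1]
  -- combine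
  have hfinal := hlen.div hdelta one_ne_zero
  rw [div_one] at hfinal
  apply hfinal.congr'
  filter_upwards [hdpos, eventually_ge_atTop 1] with N hpos hN
  have hNpos : (0:ℝ) < (N:ℝ) := by exact_mod_cast hN
  simp only [polyIncon, Pi.div_apply]
  field_simp
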